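/- Let φ : Σ → Σ* be a non-erasing substitution with φ(a) = a·u for some nonempty word u, such that φᵏ(u) is nonempty for all k, and let x = φ^ω(a) be its fixpoint. Then for every position k ∈ ℕ, the value computed by the addressing sequence automaton on the address of position k equals k: (π(a, rep(k)))₀ = k, where rep(k) is the (k+1)-th word (in radix order) of the language of the addressing automaton without leading zeros. -/
import Mathlib


/-- The shift operator on integer sequences. -/
def shift (s : ℕ → ℤ) : ℕ → ℤ := fun n => s (n + 1)

/-- Apply a substitution `φ` to a word. -/
def applyW {n : ℕ} (φ : Fin n → List (Fin n)) (w : List (Fin n)) : List (Fin n) :=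
  w.flatMap φ

/-- The weight `π(b, i)` of the addressing sequence automaton: the sequence of
lengths of the images under `φᵐ` of the length-`i` prefix of `φ(b)`. -/
def weightSeq {n : ℕ} (φ : Fin n → List (Fin n)) (b : Fin n) (i : ℕ) : ℕ → ℤ :=
  fun m => (((applyW φ)^[m] ((φ b).take i)).length : ℤ)

/-- One step of the addressing sequence automaton: from state `b` read the digit
`i < |φ(b)|`, go to the letter `φ(b)ᵢ` and add the weight `π(b, i)`. -/
def addrStep {n : ℕ} (φ : Fin n → List (Fin n)) :
    Option (Fin n × (ℕ → ℤ)) → ℕ → Option (Fin n × (ℕ → ℤ))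
  | none, _ => none
  | some (b, s), i =>
      if h : i < (φ b).length then some ((φ b).get ⟨i, h⟩, shift s + weightSeq φ b i)
      else none

/-- Run of the addressing sequence automaton on an address (a word of digits),
computing the reached state and the accumulated weight sequence. -/
def addrRun {n : ℕ} (φ : Fin n → List (Fin n)) (q : Fin n) (u : List ℕ) :
    Option (Fin n × (ℕ → ℤ)) :=
  u.foldl (addrStep φ) (some (q, 0))

/-- The language of the Dumont–Thomas numeration system of `φ^ω(a)`: addresses
accepted by the addressing automaton, without leading zeros. -/
def addrLang {n : ℕ} (φ : Fin n → List (Fin n)) (a : Fin n) : Set (List ℕ) :=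
  { u | (addrRun φ a u).isSome ∧ u.head? ≠ some 0 }

/-- Radix order on addresses: shorter words first, lexicographic order on words
of the same length. -/
def radixLt (u v : List ℕ) : Prop :=
  u.length < v.length ∨ (u.length = v.length ∧ List.Lex (· < ·) u v)

section Aux
variable {n : ℕ} (φ : Fin n → List (Fin n))

lemma applyW_append (u v : List (Fin n)) :
    applyW φ (u ++ v) = applyW φ u ++ applyW φ v := by
  simp [applyW]

lemma iter_applyW_append (m : ℕ) (u v : List (Fin n)) :
    (applyW φ)^[m] (u ++ v) = (applyW φ)^[m] u ++ (applyW φ)^[m] v := by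
  induction m generalizing u v with
  | zero => simp
  | succ m ih => simp [Function.iterate_succ_apply, applyW_append, ih]

lemma iter_applyW_nil (m : ℕ) : (applyW φ)^[m] ([] : List (Fin n)) = [] := by
  induction m with
  | zero => simp
  | succ m ih => simp [Function.iterate_succ_apply, applyW, ih]

lemma iter_applyW_ne_nil (hne : ∀ b, φ b ≠ []) (m : ℕ) :
    ∀ w : List (Fin n), w ≠ [] → (applyW φ)^[m] w ≠ [] := by
  induction m with
  | zero => intro w hw; simpa
  | succ m ih =>
    intro w hw
    rw [Function.iterate_succ_apply]
    apply ih
    cases w with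
    | nil => exact absurd rfl hw
    | cons c w' =>
      simp only [applyW, List.flatMap_cons]
      intro h
      exact hne c (List.append_eq_nil_iff.mp h).1

/-- length of `φ^[m] [b]`. -/
def lenX (b : Fin n) (m : ℕ) : ℕ := ((applyW φ)^[m] [b]).length

/-- length of `φ^[m] (take i (φ q))`. -/
def pref (q : Fin n) (m i : ℕ) : ℕ := ((applyW φ)^[m] ((φ q).take i)).length

lemma lenX_pos (hne : ∀ b, φ b ≠ []) (b : Fin n) (m : ℕ) : 0 < lenX φ b m := by
  have := iter_applyW_ne_nil φ hne m [b] (by simp)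
  exact List.length_pos_iff.mpr this

lemma pref_zero (q : Fin n) (m : ℕ) : pref φ q m 0 = 0 := by
  simp [pref, iter_applyW_nil]

lemma pref_succ (q : Fin n) (m i : ℕ) (h : i < (φ q).length) :
    pref φ q m (i + 1) = pref φ q m i + lenX φ ((φ q).get ⟨i, h⟩) m := by
  have : (φ q).take (i+1) = (φ q).take i ++ [(φ q).get ⟨i, h⟩] := by
    rw [List.take_succ]
    simp [List.getElem?_eq_getElem h]
  unfold pref lenX
  rw [this, iter_applyW_append, List.length_append]

lemma pref_mono (q : Fin n) (m : ℕ) : Monotone (pref φ q m) := by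
  apply monotone_nat_of_le_succ
  intro i
  by_cases h : i < (φ q).length
  · rw [pref_succ φ q m i h]; omega
  · have h1 : (φ q).take i = φ q := List.take_of_length_le (by omega)
    have h2 : (φ q).take (i+1) = φ q := List.take_of_length_le (by omega)
    simp [pref, h1, h2]

lemma pref_len (q : Fin n) (m : ℕ) :
    pref φ q m (φ q).length = lenX φ q (m + 1) := by
  have h1 : applyW φ [q] = φ q := by simp [applyW]
  simp [pref, lenX, List.take_length, Function.iterate_succ_apply, h1]

end Aux

section Run
variable {n : ℕ} (φ : Fin n → List (Fin n))

lemma foldl_addrStep_none (v : List ℕ) : v.foldl (addrStep φ) none = none := by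
  induction v with
  | nil => rfl
  | cons i v ih => simpa [addrStep] using ih

lemma foldl_addrStep_some (v : List ℕ) :
    ∀ (q : Fin n) (s₀ : ℕ → ℤ),
    v.foldl (addrStep φ) (some (q, s₀)) =
      (addrRun φ q v).map (fun ps => (ps.1, (fun m => s₀ (m + v.length)) + ps.2)) := by
  induction v with
  | nil =>
      intro q s₀
      show some (q, s₀) = (some (q, 0)).map _
      simp only [Option.map_some]
      congr 1
      refine Prod.ext rfl ?_
      funext m; simp
  | cons i v ih =>
      intro q s₀
      show v.foldl (addrStep φ) (addrStep φ (some (q, s₀)) i) = _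
      have hcons : addrRun φ q (i :: v) = v.foldl (addrStep φ) (addrStep φ (some (q, 0)) i) := rfl
      by_cases h : i < (φ q).length
      · rw [show addrStep φ (some (q, s₀)) i
              = some ((φ q).get ⟨i, h⟩, shift s₀ + weightSeq φ q i) from by
            simp [addrStep, h]]
        rw [ih]
        rw [hcons, show addrStep φ (some (q, 0)) i
              = some ((φ q).get ⟨i, h⟩, shift (0 : ℕ → ℤ) + weightSeq φ q i) from by
            simp [addrStep, h]]
        rw [ih]
        cases hr : addrRun φ ((φ q).get ⟨i, h⟩) v with
        | none => simp
        | some ps =>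
          simp only [Option.map_some, Option.map_map]
          congr 1
          refine Prod.ext rfl ?_
          funext m
          simp [shift, Pi.add_apply, List.length_cons]
          ring_nf
      · rw [show addrStep φ (some (q, s₀)) i = none from by simp [addrStep, h]]
        rw [hcons, show addrStep φ (some (q, 0)) i = none from by simp [addrStep, h]]
        rw [foldl_addrStep_none]
        rfl

lemma addrRun_cons (q : Fin n) (i : ℕ) (v : List ℕ) :
    addrRun φ q (i :: v) =
      if h : i < (φ q).length then
        (addrRun φ ((φ q).get ⟨i, h⟩) v).map
          (fun ps => (ps.1, (fun m => weightSeq φ q i (m + v.length)) + ps.2))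
      else none := by
  have hcons : addrRun φ q (i :: v) = v.foldl (addrStep φ) (addrStep φ (some (q, 0)) i) := rfl
  by_cases h : i < (φ q).length
  · rw [dif_pos h, hcons,
      show addrStep φ (some (q, 0)) i
        = some ((φ q).get ⟨i, h⟩, shift (0 : ℕ → ℤ) + weightSeq φ q i) from by
        simp [addrStep, h],
      foldl_addrStep_some]
    cases hr : addrRun φ ((φ q).get ⟨i, h⟩) v with
    | none => rfl
    | some ps =>
      simp only [Option.map_some]
      congr 1
      refine Prod.ext rfl ?_
      funext m
      simp [shift, Pi.add_apply]
  · rw [dif_neg h, hcons,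
      show addrStep φ (some (q, 0)) i = none from by simp [addrStep, h],
      foldl_addrStep_none]

lemma addrRun_cons_some {q : Fin n} {i : ℕ} {v : List ℕ} {p : Fin n} {s : ℕ → ℤ}
    (h : addrRun φ q (i :: v) = some (p, s)) :
    ∃ (hi : i < (φ q).length) (s' : ℕ → ℤ),
      addrRun φ ((φ q).get ⟨i, hi⟩) v = some (p, s') ∧
      s 0 = (pref φ q v.length i : ℤ) + s' 0 := by
  rw [addrRun_cons] at h
  by_cases hi : i < (φ q).length
  · rw [dif_pos hi] at h
    cases hr : addrRun φ ((φ q).get ⟨i, hi⟩) v with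
    | none => rw [hr] at h; simp at h
    | some ps =>
      obtain ⟨ps1, ps2⟩ := ps
      rw [hr] at h
      simp only [Option.map_some, Option.some.injEq, Prod.mk.injEq] at h
      obtain ⟨hp, hs⟩ := h
      subst hp; subst hs
      refine ⟨hi, ps2, hr, ?_⟩
      simp [weightSeq, pref, Pi.add_apply]
  · rw [dif_neg hi] at h; exact absurd h (by simp)

lemma addrRun_cons_mk {q : Fin n} {i : ℕ} {v : List ℕ} {p : Fin n} {s' : ℕ → ℤ}
    (hi : i < (φ q).length)
    (h : addrRun φ ((φ q).get ⟨i, hi⟩) v = some (p, s')) :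
    ∃ s, addrRun φ q (i :: v) = some (p, s) ∧
      s 0 = (pref φ q v.length i : ℤ) + s' 0 := by
  rw [addrRun_cons, dif_pos hi, h]
  refine ⟨_, rfl, ?_⟩
  simp [weightSeq, pref, Pi.add_apply]

end Run

section Facts
variable {n : ℕ} (φ : Fin n → List (Fin n))

lemma run_bound :
    ∀ (v : List ℕ) (q p : Fin n) (s : ℕ → ℤ), addrRun φ q v = some (p, s) →
      0 ≤ s 0 ∧ s 0 < (lenX φ q v.length : ℤ) := by
  intro v
  induction v with
  | nil =>
    intro q p s h
    have : (q, (0 : ℕ → ℤ)) = (p, s) := by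
      simpa [addrRun] using h
    have hs : (0 : ℕ → ℤ) = s := congrArg Prod.snd this
    rw [← hs]
    simp [lenX]
  | cons i v ih =>
    intro q p s h
    obtain ⟨hi, s', hrun, hs0⟩ := addrRun_cons_some φ h
    obtain ⟨h1, h2⟩ := ih _ _ _ hrun
    constructor
    · rw [hs0]; positivity
    · rw [hs0]
      have hstep : pref φ q v.length i + lenX φ ((φ q).get ⟨i, hi⟩) v.length
          = pref φ q v.length (i + 1) := (pref_succ φ q v.length i hi).symm
      have hle : pref φ q v.length (i + 1) ≤ pref φ q v.length (φ q).length :=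
        pref_mono φ q v.length hi
      rw [pref_len] at hle
      have : s 0 < (pref φ q v.length i : ℤ) + (lenX φ ((φ q).get ⟨i, hi⟩) v.length : ℤ) := by
        rw [hs0]; omega
      simp only [List.length_cons]
      push_cast at this ⊢
      omega

lemma run_lex_mono :
    ∀ {v w : List ℕ}, List.Lex (· < ·) v w → v.length = w.length →
    ∀ (q p p' : Fin n) (s s' : ℕ → ℤ),
      addrRun φ q v = some (p, s) → addrRun φ q w = some (p', s') → s 0 < s' 0 := by
  intro v w hlex
  induction hlex with
  | nil => intro hlen; simp at hlen
  | @rel i l j l' hij =>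
    intro hlen q p p' s s' hv hw
    simp only [List.length_cons] at hlen
    have hll : l.length = l'.length := by omega
    obtain ⟨hi, s₁, hrun1, hs1⟩ := addrRun_cons_some φ hv
    obtain ⟨hj, s₂, hrun2, hs2⟩ := addrRun_cons_some φ hw
    obtain ⟨hb1, hb1'⟩ := run_bound φ _ _ _ _ hrun1
    obtain ⟨hb2, -⟩ := run_bound φ _ _ _ _ hrun2
    have hstep : pref φ q l.length (i + 1)
        = pref φ q l.length i + lenX φ ((φ q).get ⟨i, hi⟩) l.length :=
      pref_succ φ q l.length i hi
    have hmono : pref φ q l.length (i + 1) ≤ pref φ q l.length j :=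
      pref_mono φ q l.length hij
    rw [← hll] at hs2
    have h2' : (pref φ q l.length (i + 1) : ℤ) ≤ pref φ q l.length j := by exact_mod_cast hmono
    have hstep' : (pref φ q l.length (i + 1) : ℤ)
        = pref φ q l.length i + lenX φ ((φ q).get ⟨i, hi⟩) l.length := by exact_mod_cast hstep
    rw [hs1, hs2]
    omega
  | @cons i l l' h ih =>
    intro hlen q p p' s s' hv hw
    simp only [List.length_cons] at hlen
    have hll : l.length = l'.length := by omega
    obtain ⟨hi, s₁, hrun1, hs1⟩ := addrRun_cons_some φ hv
    obtain ⟨hi', s₂, hrun2, hs2⟩ := addrRun_cons_some φ hw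
    have : s₁ 0 < s₂ 0 := ih hll _ _ _ _ _ hrun1 hrun2
    rw [← hll] at hs2
    rw [hs1, hs2]
    omega

lemma exists_interval (T : ℕ → ℕ) (_hT : Monotone T) :
    ∀ (N : ℕ) (k : ℕ), T 0 ≤ k → k < T N → ∃ i, i < N ∧ T i ≤ k ∧ k < T (i + 1) := by
  intro N
  induction N with
  | zero => intro k h0 hN; omega
  | succ N ih =>
    intro k h0 hN
    by_cases h : T N ≤ k
    · exact ⟨N, Nat.lt_succ_self N, h, hN⟩
    · obtain ⟨i, hi, h1, h2⟩ := ih k h0 (by omega)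
      exact ⟨i, by omega, h1, h2⟩

lemma run_surj :
    ∀ (m : ℕ) (q : Fin n) (k : ℕ), k < lenX φ q m →
    ∃ (v : List ℕ) (p : Fin n) (s : ℕ → ℤ),
      v.length = m ∧ addrRun φ q v = some (p, s) ∧ s 0 = (k : ℤ) := by
  intro m
  induction m with
  | zero =>
    intro q k hk
    have : k = 0 := by simp [lenX] at hk; omega
    exact ⟨[], q, 0, rfl, rfl, by simp [this]⟩
  | succ m ih =>
    intro q k hk
    rw [← pref_len] at hk
    obtain ⟨i, hiN, h1, h2⟩ := exists_interval (pref φ q m) (pref_mono φ q m)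
      (φ q).length k (by simp [pref_zero]) hk
    rw [pref_succ φ q m i hiN] at h2
    obtain ⟨v, p, s', hvlen, hrun, hs⟩ := ih ((φ q).get ⟨i, hiN⟩) (k - pref φ q m i) (by omega)
    obtain ⟨s, hrun', hs0⟩ := addrRun_cons_mk φ hiN hrun
    refine ⟨i :: v, p, s, by simp [hvlen], hrun', ?_⟩
    rw [hs0, hvlen, hs]
    have : (↑(k - pref φ q m i) : ℤ) = (k : ℤ) - pref φ q m i := by
      rw [Nat.cast_sub h1]
    omega

end Facts

section Top
variable {n : ℕ} (φ : Fin n → List (Fin n)) (a : Fin n) (u : List (Fin n))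

lemma lenX_a_succ (hfix : φ a = a :: u) (m : ℕ) :
    lenX φ a (m + 1) = lenX φ a m + ((applyW φ)^[m] u).length := by
  have h1 : applyW φ [a] = φ a := by simp [applyW]
  rw [lenX, Function.iterate_succ_apply, h1, hfix,
    show a :: u = [a] ++ u from rfl, iter_applyW_append, List.length_append]
  rfl

lemma lenX_a_mono (hfix : φ a = a :: u) : Monotone (lenX φ a) :=
  monotone_nat_of_le_succ (fun m => by rw [lenX_a_succ φ a u hfix m]; omega)

lemma lenX_a_lt (hfix : φ a = a :: u) (hk : ∀ k : ℕ, (applyW φ)^[k] u ≠ []) (m : ℕ) :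
    m < lenX φ a m := by
  induction m with
  | zero => simp [lenX]
  | succ m ih =>
    have : 0 < ((applyW φ)^[m] u).length := List.length_pos_iff.mpr (hk m)
    rw [lenX_a_succ φ a u hfix m]
    omega

lemma pref_a_one (hfix : φ a = a :: u) (m : ℕ) : pref φ a m 1 = lenX φ a m := by
  have : (φ a).take 1 = [a] := by rw [hfix]; rfl
  rw [pref, this]; rfl

def hasVal (r : List ℕ) (k : ℕ) : Prop :=
  ∃ p s, addrRun φ a r = some (p, s) ∧ s 0 = (k : ℤ)

lemma hasVal_unique {r : List ℕ} {k k' : ℕ}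
    (h1 : hasVal φ a r k) (h2 : hasVal φ a r k') : k = k' := by
  obtain ⟨p, s, e1, v1⟩ := h1
  obtain ⟨p', s', e2, v2⟩ := h2
  rw [e1, Option.some.injEq] at e2
  have : s = s' := congrArg Prod.snd e2
  rw [this] at v1
  exact_mod_cast v1.symm.trans v2

lemma exists_val {r : List ℕ} (h : (addrRun φ a r).isSome) : ∃ k, hasVal φ a r k := by
  obtain ⟨x, hx⟩ := Option.isSome_iff_exists.mp h
  obtain ⟨p, s⟩ := x
  have hb := (run_bound φ _ _ _ _ hx).1
  exact ⟨(s 0).toNat, p, s, hx, (Int.toNat_of_nonneg hb).symm⟩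

lemma head_zero_bound (hfix : φ a = a :: u) {t : List ℕ} {p : Fin n} {s : ℕ → ℤ}
    (h : addrRun φ a (0 :: t) = some (p, s)) :
    s 0 < (lenX φ a t.length : ℤ) := by
  obtain ⟨hi, s', hrun, hs0⟩ := addrRun_cons_some φ h
  have hget : (φ a).get ⟨0, hi⟩ = a := by
    have h1 : (φ a)[0]? = some a := by rw [hfix]; simp
    have h2 : (φ a)[0]? = some ((φ a).get ⟨0, hi⟩) := by
      simp [List.getElem?_eq_getElem hi]
    rw [h1] at h2
    exact (Option.some_injective _ h2).symm
  rw [hget] at hrun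
  have hb := (run_bound φ _ _ _ _ hrun).2
  rw [hs0, pref_zero]
  simpa using hb

lemma lang_lower (hfix : φ a = a :: u) {i : ℕ} {t : List ℕ} {p : Fin n} {s : ℕ → ℤ}
    (hi0 : i ≠ 0) (h : addrRun φ a (i :: t) = some (p, s)) :
    (lenX φ a t.length : ℤ) ≤ s 0 := by
  obtain ⟨hi, s', hrun, hs0⟩ := addrRun_cons_some φ h
  have h1 : pref φ a t.length 1 ≤ pref φ a t.length i := pref_mono φ a t.length (by omega)
  rw [pref_a_one φ a u hfix] at h1
  have h2 := (run_bound φ _ _ _ _ hrun).1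
  rw [hs0]
  have : (lenX φ a t.length : ℤ) ≤ (pref φ a t.length i : ℤ) := by exact_mod_cast h1
  omega

lemma val_lt (hfix : φ a = a :: u) {r r' : List ℕ} {k k' : ℕ}
    (hr' : r'.head? ≠ some 0)
    (hv : hasVal φ a r k) (hv' : hasVal φ a r' k') (hlt : radixLt r r') : k < k' := by
  obtain ⟨p, s, h1, e1⟩ := hv
  obtain ⟨p', s', h2, e2⟩ := hv'
  rcases hlt with hlen | ⟨hlen, hlex⟩
  · have hb := (run_bound φ _ _ _ _ h1).2
    cases r' with
    | nil => simp at hlen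
    | cons i t =>
      have hi0 : i ≠ 0 := by simpa using hr'
      have hlow := lang_lower φ a u hfix hi0 h2
      have hmono : lenX φ a r.length ≤ lenX φ a t.length :=
        lenX_a_mono φ a u hfix (by simp only [List.length_cons] at hlen; omega)
      rw [e1] at hb; rw [e2] at hlow
      have hc : (lenX φ a r.length : ℤ) ≤ (lenX φ a t.length : ℤ) := by exact_mod_cast hmono
      omega
  · have := run_lex_mono φ hlex hlen _ _ _ _ _ h1 h2
    rw [e1, e2] at this; exact_mod_cast this

lemma val_surj (hfix : φ a = a :: u)
    (hk : ∀ k : ℕ, (applyW φ)^[k] u ≠ []) (k : ℕ) :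
    ∃ r, r ∈ addrLang φ a ∧ hasVal φ a r k := by
  rcases Nat.eq_zero_or_pos k with rfl | hkpos
  · exact ⟨[], ⟨by simp [addrRun], by simp⟩, a, 0, rfl, by simp⟩
  · have h0 : lenX φ a 0 ≤ k := by
      have : lenX φ a 0 = 1 := by simp [lenX]
      omega
    have hbig : k < lenX φ a k := lenX_a_lt φ a u hfix hk k
    obtain ⟨m, hm, hle, hlt⟩ :=
      exists_interval (lenX φ a) (lenX_a_mono φ a u hfix) k k h0 hbig
    obtain ⟨v, p, s, hvlen, hrun, hs⟩ := run_surj φ (m + 1) a k hlt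
    cases v with
    | nil => simp at hvlen
    | cons i t =>
      have htlen : t.length = m := by simpa using hvlen
      have hi0 : i ≠ 0 := by
        rintro rfl
        have hb := head_zero_bound φ a u hfix hrun
        rw [hs, htlen] at hb
        have : (lenX φ a m : ℤ) ≤ (k : ℤ) := by exact_mod_cast hle
        omega
      exact ⟨i :: t, ⟨by simp [hrun], by simpa using hi0⟩, p, s, hrun, hs⟩

lemma lex_total : ∀ (v w : List ℕ), v.length = w.length → v ≠ w →
    List.Lex (· < ·) v w ∨ List.Lex (· < ·) w v := by
  intro v
  induction v with
  | nil =>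
    intro w hlen hne
    cases w with
    | nil => exact absurd rfl hne
    | cons j t => simp at hlen
  | cons i t ih =>
    intro w hlen hne
    cases w with
    | nil => simp at hlen
    | cons j t' =>
      rcases lt_trichotomy i j with h | rfl | h
      · exact Or.inl (List.Lex.rel h)
      · have ht : t ≠ t' := by rintro rfl; exact hne rfl
        rcases ih t' (by simpa using hlen) ht with h | h
        · exact Or.inl (List.Lex.cons h)
        · exact Or.inr (List.Lex.cons h)
      · exact Or.inr (List.Lex.rel h)

lemma radix_total {v w : List ℕ} (h : v ≠ w) : radixLt v w ∨ radixLt w v := by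
  rcases lt_trichotomy v.length w.length with h1 | h1 | h1
  · exact Or.inl (Or.inl h1)
  · rcases lex_total v w h1 h with h2 | h2
    · exact Or.inl (Or.inr ⟨h1, h2⟩)
    · exact Or.inr (Or.inr ⟨h1.symm, h2⟩)
  · exact Or.inr (Or.inl h1)

end Top

/-- for a non-erasing substitution `φ` with fixpoint `φ^ω(a)`,
the value computed by the addressing sequence automaton on the `(k+1)`-th word
(in radix order) of the language without leading zeros equals `k`. -/
theorem addrRun_value_eq_position {n : ℕ} (φ : Fin n → List (Fin n)) (a : Fin n)
    (hne : ∀ b, φ b ≠ []) (u : List (Fin n)) (hu : u ≠ []) (hfix : φ a = a :: u)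
    (hk : ∀ k : ℕ, (applyW φ)^[k] u ≠ []) :
    ∀ (k : ℕ) (r : List ℕ), r ∈ addrLang φ a →
      { v | v ∈ addrLang φ a ∧ radixLt v r }.ncard = k →
      ∃ (q : Fin n) (s : ℕ → ℤ), addrRun φ a r = some (q, s) ∧ s 0 = (k : ℤ) := by
  intro k r hr hcard
  obtain ⟨k₀, hval⟩ := exists_val φ a hr.1
  suffices hks : k = k₀ by
    obtain ⟨p, s, h1, e1⟩ := hval
    exact ⟨p, s, h1, by rw [e1, hks]⟩
  classical
  have hsurj := val_surj φ a u hfix hk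
  set g : ℕ → List ℕ := fun j => (hsurj j).choose with hg
  have hgL : ∀ j, g j ∈ addrLang φ a := fun j => (hsurj j).choose_spec.1
  have hgV : ∀ j, hasVal φ a (g j) j := fun j => (hsurj j).choose_spec.2
  have key : { v | v ∈ addrLang φ a ∧ radixLt v r } = g '' Set.Iio k₀ := by
    ext v
    simp only [Set.mem_setOf_eq, Set.mem_image, Set.mem_Iio]
    constructor
    · rintro ⟨hvL, hvlt⟩
      obtain ⟨j, hj⟩ := exists_val φ a hvL.1
      have hjlt : j < k₀ := val_lt φ a u hfix hr.2 hj hval hvlt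
      refine ⟨j, hjlt, ?_⟩
      by_contra hne'
      rcases radix_total (fun hh : g j = v => hne' hh) with h | h
      · exact absurd (val_lt φ a u hfix hvL.2 (hgV j) hj h) (lt_irrefl j)
      · exact absurd (val_lt φ a u hfix (hgL j).2 hj (hgV j) h) (lt_irrefl j)
    · rintro ⟨j, hjlt, rfl⟩
      refine ⟨hgL j, ?_⟩
      have hne' : g j ≠ r := by
        intro heq
        have : j = k₀ := hasVal_unique φ a (heq ▸ hgV j) hval
        omega
      rcases radix_total hne' with h | h
      · exact h
      · exact absurd (val_lt φ a u hfix (hgL j).2 hval (hgV j) h) (by omega)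
  rw [key] at hcard
  have hinj : Set.InjOn g (Set.Iio k₀) := by
    intro x _ y _ hxy
    exact hasVal_unique φ a (hxy ▸ hgV x) (hgV y)
  rw [Set.ncard_image_of_injOn hinj] at hcard
  rw [show Set.Iio k₀ = ↑(Finset.range k₀) from (Finset.coe_range k₀).symm,
    Set.ncard_coe_finset, Finset.card_range] at hcard
  omega
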